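/- arXiv:2209.09838 — 2 statements merged into one kernel-verified Lean document; each statement's English description precedes it below -/
import Mathlib

section
/- Every extension of the argument system is deductively closed: if ℰ is an extension and ℰ ⊢ φ (classically), then φ ∈ ℰ. -/
/-- Classical propositional formulas. -/
inductive PropForm (α : Type) : Type
  | atom : α → PropForm α
  | neg : PropForm α → PropForm α
  | and : PropForm α → PropForm α → PropForm α
  | or : PropForm α → PropForm α → PropForm α

def PropForm.eval {α : Type} (v : α → Bool) : PropForm α → Bool
  | atom a => v a
  | neg φ => !φ.eval v
  | and φ ψ => φ.eval v && ψ.eval v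
  | or φ ψ => φ.eval v || ψ.eval v

/-- Classical (semantic) consequence `Γ ⊢ φ`. -/
def Entails {α : Type} (Γ : Set (PropForm α)) (φ : PropForm α) : Prop :=
  ∀ v : α → Bool, (∀ ψ ∈ Γ, ψ.eval v = true) → φ.eval v = true

/-- A defeasible rule `φ ⤳ ψ` is a pair (antecedent, consequent). -/
abbrev Rule (α : Type) := PropForm α × PropForm α

/-- A component `⟨A', α⟩` of an argument: either a premise pair `⟨∅, φ⟩`
or a rule pair `⟨A', φ ⤳ ψ⟩`. Arguments are (finite) sets of such pairs,
modeled as lists. -/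
inductive ArgPair (α : Type) : Type
  | prem : PropForm α → ArgPair α
  | rule : List (ArgPair α) → Rule α → ArgPair α

abbrev Arg (α : Type) := List (ArgPair α)

/-- Roos's recursive definition of "A is an argument for ψ" over ⟨Σ, D⟩. -/
inductive IsArgFor {α : Type} (S : Set (PropForm α)) (D : Set (Rule α)) :
    Arg α → PropForm α → Prop
  | prem {φ} : φ ∈ S → IsArgFor S D [ArgPair.prem φ] φ
  | combine (ps : List (Arg α × PropForm α)) {ψ} :
      (∀ q ∈ ps, IsArgFor S D q.1 q.2) →
      Entails {φ | ∃ q ∈ ps, q.2 = φ} ψ →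
      IsArgFor S D (ps.map Prod.fst).flatten ψ
  | rule {A' : Arg α} {r : Rule α} : r ∈ D → IsArgFor S D A' r.1 →
      IsArgFor S D [ArgPair.rule A' r] r.2

/-- `⟨A', α⟩` is a sub-structure of the argument `B`. -/
inductive SubStruct {α : Type} : ArgPair α → Arg α → Prop
  | prem {φ : PropForm α} {B : Arg α} :
      ArgPair.prem φ ∈ B → SubStruct (ArgPair.prem φ) B
  | rule {A' B' : Arg α} {r : Rule α} {B : Arg α} :
      ArgPair.rule B' r ∈ B → (∀ p ∈ A', SubStruct p B') →
      SubStruct (ArgPair.rule A' r) B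
  | nested {p : ArgPair α} {B' : Arg α} {β : Rule α} {B : Arg α} :
      ArgPair.rule B' β ∈ B → SubStruct p B' → SubStruct p B

/-- `A` is a sub-argument of `B` (`A ≤ B`). -/
def SubArg {α : Type} (A B : Arg α) : Prop := ∀ p ∈ A, SubStruct p B

/-- The rule `r` occurs (somewhere) in the argument component `p`. -/
inductive RuleIn {α : Type} (r : Rule α) : ArgPair α → Prop
  | here {A' : Arg α} : RuleIn r (ArgPair.rule A' r)
  | there {A' : Arg α} {r' : Rule α} {p : ArgPair α} :
      p ∈ A' → RuleIn r p → RuleIn r (ArgPair.rule A' r')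

/-- The premise `φ` occurs in the argument component `p`. -/
inductive PremIn {α : Type} (φ : PropForm α) : ArgPair α → Prop
  | here : PremIn φ (ArgPair.prem φ)
  | there {A' : Arg α} {r : Rule α} {p : ArgPair α} :
      p ∈ A' → PremIn φ p → PremIn φ (ArgPair.rule A' r)

/-- `Ã`: the set of all rules used in the argument `A`. -/
def argRules {α : Type} (A : Arg α) : Set (Rule α) := {r | ∃ p ∈ A, RuleIn r p}

/-- `Ā`: the set of all premises used in the argument `A`. -/
def argPrems {α : Type} (A : Arg α) : Set (PropForm α) := {φ | ∃ p ∈ A, PremIn φ p}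

lemma eval_continuous {α : Type} (φ : PropForm α) :
    Continuous fun v : α → Bool => φ.eval v := by
  induction φ with
  | atom a => exact continuous_apply a
  | neg φ ih => exact (continuous_of_discreteTopology (f := Bool.not)).comp ih
  | and φ ψ ih1 ih2 =>
      exact (continuous_of_discreteTopology
        (f := fun p : Bool × Bool => p.1 && p.2)).comp (ih1.prodMk ih2)
  | or φ ψ ih1 ih2 =>
      exact (continuous_of_discreteTopology
        (f := fun p : Bool × Bool => p.1 || p.2)).comp (ih1.prodMk ih2)

lemma entails_compact {α : Type} (Γ : Set (PropForm α)) (φ : PropForm α)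
    (h : Entails Γ φ) : ∃ t : Finset (PropForm α), ↑t ⊆ Γ ∧ Entails ↑t φ := by
  classical
  set s : Set (α → Bool) := {v | φ.eval v = false} with hs
  have hsclosed : IsClosed s := by
    have := IsClosed.preimage (eval_continuous φ) (isClosed_discrete ({false} : Set Bool))
    simpa [s, Set.preimage, Set.mem_singleton_iff] using this
  have hscomp : IsCompact s := hsclosed.isCompact
  set Z : Γ → Set (α → Bool) := fun ψ => {v | (ψ : PropForm α).eval v = true} with hZ
  have hZc : ∀ ψ : Γ, IsClosed (Z ψ) := by
    intro ψ
    have := IsClosed.preimage (eval_continuous (ψ : PropForm α)) (isClosed_discrete ({true} : Set Bool))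
    simpa [Z, Set.preimage, Set.mem_singleton_iff] using this
  have hempty : (s ∩ ⋂ ψ : Γ, Z ψ) = ∅ := by
    ext v
    simp only [Set.mem_inter_iff, Set.mem_iInter, Set.mem_empty_iff_false, iff_false]
    rintro ⟨hv, hall⟩
    have := h v (fun ψ hψ => hall ⟨ψ, hψ⟩)
    simp [s] at hv
    rw [this] at hv
    exact Bool.true_eq_false.mp hv
  obtain ⟨t0, ht0⟩ := hscomp.elim_finite_subfamily_closed Z hZc hempty
  refine ⟨t0.image Subtype.val, ?_, ?_⟩
  · intro ψ hψ
    simp only [Finset.coe_image, Set.mem_image] at hψ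
    obtain ⟨ψ', _, rfl⟩ := hψ
    exact ψ'.2
  · intro v hv
    by_contra hne
    have hvf : φ.eval v = false := by
      cases hφ : φ.eval v with
      | true => exact absurd hφ hne
      | false => rfl
    have : v ∈ (s ∩ ⋂ ψ ∈ t0, Z ψ) := by
      refine ⟨hvf, ?_⟩
      simp only [Set.mem_iInter]
      intro ψ hψ
      exact hv ψ (by simp only [Finset.coe_image, Set.mem_image]; exact ⟨ψ, hψ, rfl⟩)
    rw [ht0] at this
    exact this

/-- Every extension is deductively closed: if `ℰ` is the set of propositions
supported by arguments whose rules avoid the defeated rules `Ω`, and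
`ℰ ⊢ φ` classically, then `φ ∈ ℰ`. -/
theorem extension_deductively_closed {α : Type} (S : Set (PropForm α))
    (D : Set (Rule α)) (Ω : Set (Rule α)) (φ : PropForm α)
    (h : Entails {ψ | ∃ A : Arg α, IsArgFor S D A ψ ∧ argRules A ∩ Ω = ∅} φ) :
    ∃ A : Arg α, IsArgFor S D A φ ∧ argRules A ∩ Ω = ∅ := by
  classical
  obtain ⟨t, ht1, ht2⟩ := entails_compact _ φ h
  choose A hA hA' using fun ψ : {x // x ∈ t} => ht1 ψ.2
  set ps : List (Arg α × PropForm α) :=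
    t.attach.toList.map (fun ψ => (A ψ, ψ.1)) with hps
  refine ⟨(ps.map Prod.fst).flatten, ?_, ?_⟩
  · refine IsArgFor.combine ps ?_ ?_
    · intro q hq
      simp only [ps, List.mem_map] at hq
      obtain ⟨ψ, _, rfl⟩ := hq
      exact hA ψ
    · intro v hv
      refine ht2 v ?_
      intro ψ hψ
      refine hv ψ ⟨(A ⟨ψ, hψ⟩, ψ), ?_, rfl⟩
      simp only [ps, List.mem_map]
      exact ⟨⟨ψ, hψ⟩, by simp, rfl⟩
  · ext r
    simp only [Set.mem_inter_iff, Set.mem_empty_iff_false, iff_false]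
    rintro ⟨⟨p, hp, hr⟩, hΩ⟩
    obtain ⟨l, hl, hpl⟩ := List.mem_flatten.mp hp
    simp only [ps, List.map_map, List.mem_map] at hl
    obtain ⟨ψ, _, rfl⟩ := hl
    have : r ∈ argRules (A ψ) ∩ Ω := ⟨⟨p, hpl, hr⟩, hΩ⟩
    rw [hA' ψ] at this
    exact this
end

section
/- Given a minimal argument A_⊥ for an inconsistency with last rules ⃗A_⊥, removing a pair ⟨A_φ, φ ⤳ ψ⟩ ∈ A_⊥ and adding A_φ yields an argument A_{¬(φ⤳ψ)} whose premise set satisfies Ā_{¬(φ⤳ψ)} = Ā_⊥ and whose rule set satisfies Ã_{¬(φ⤳ψ)} = Ã_⊥ \ {φ ⤳ ψ} whenever φ ⤳ ψ does not occur elsewhere in A_⊥. -/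
/-- Undercutting argument from a minimal argument for an inconsistency:
if `A_⊥ = ⟨A_φ, φ ⤳ ψ⟩ :: rest` is an argument for an inconsistency and the
rule `r = φ ⤳ ψ` occurs nowhere else in `A_⊥`, then the undercutting argument
`A_{¬(φ⤳ψ)} = (A_⊥ \ {⟨A_φ, φ⤳ψ⟩}) ∪ A_φ = rest ++ A_φ` has the same
premises as `A_⊥` and its rule set is `Ã_⊥ \ {φ ⤳ ψ}`. -/
theorem undercutting_argument_prems_rules {α : Type} (S : Set (PropForm α))
    (D : Set (Rule α)) (Aφ rest : Arg α) (r : Rule α)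
    (hbot : ∃ χ : PropForm α,
      IsArgFor S D (ArgPair.rule Aφ r :: rest) χ ∧ ∀ v : α → Bool, χ.eval v = false)
    (hmin : ∀ p ∈ rest, ¬ RuleIn r p)
    (hnotin : r ∉ argRules Aφ) :
    argPrems (rest ++ Aφ) = argPrems (ArgPair.rule Aφ r :: rest) ∧
    argRules (rest ++ Aφ) = argRules (ArgPair.rule Aφ r :: rest) \ {r} := by
  constructor
  · ext φ
    constructor
    · rintro ⟨p, hp, hin⟩
      rcases List.mem_append.mp hp with h | h
      · exact ⟨p, List.mem_cons_of_mem _ h, hin⟩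
      · exact ⟨ArgPair.rule Aφ r, List.mem_cons_self, PremIn.there h hin⟩
    · rintro ⟨p, hp, hin⟩
      rcases List.mem_cons.mp hp with h | h
      · subst h
        cases hin with
        | there hq hin' => exact ⟨_, List.mem_append_right _ hq, hin'⟩
      · exact ⟨p, List.mem_append_left _ h, hin⟩
  · ext s
    constructor
    · rintro ⟨p, hp, hin⟩
      rcases List.mem_append.mp hp with h | h
      · exact ⟨⟨p, List.mem_cons_of_mem _ h, hin⟩, fun hs => hmin p h (hs ▸ hin)⟩
      · refine ⟨⟨ArgPair.rule Aφ r, List.mem_cons_self, RuleIn.there h hin⟩,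
          fun hs => hnotin ⟨p, h, hs ▸ hin⟩⟩
    · rintro ⟨⟨p, hp, hin⟩, hne⟩
      rcases List.mem_cons.mp hp with h | h
      · subst h
        cases hin with
        | here => exact absurd rfl hne
        | there hq hin' => exact ⟨_, List.mem_append_right _ hq, hin'⟩
      · exact ⟨p, List.mem_append_left _ h, hin⟩
end
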